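/- Every caterpillar admits a 2-track layout. -/

import Mathlib

open SimpleGraph Walk

/-- Abstract arithmetic core of the 2-track layout construction. -/
theorem twotrack_aux {V : Type*} (G : SimpleGraph V)
    (I R : V → ℕ) (n : ℕ) (hR : ∀ w, R w ≤ n)
    (hinj : ∀ w w', I w = I w' → R w = R w' → w = w')
    (hedge : ∀ x y, G.Adj x y →
      (R x = 0 ∧ R y = 0 ∧ (I x + 1 = I y ∨ I y + 1 = I x)) ∨
      (R x = 0 ∧ 1 ≤ R y ∧ I x = I y) ∨ (1 ≤ R x ∧ R y = 0 ∧ I x = I y)) :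
    ∃ (t : V → Fin 2) (f : V → ℕ), Function.Injective f ∧
      (∀ u v, G.Adj u v → t u ≠ t v) ∧
      (∀ a b a' b' : V, G.Adj a b → G.Adj a' b' → t a = t a' → t b = t b' →
        ¬ (f a < f a' ∧ f b' < f b)) := by
  have hlt : ∀ w w', I w * (n+1) + R w < I w' * (n+1) + R w' →
      I w ≤ I w' ∧ (I w = I w' → R w < R w') := by
    intro w w' h
    have h1 : R w ≤ n := hR w
    have h2 : R w' ≤ n := hR w'
    constructor
    · by_contra hc
      push_neg at hc
      have h3 : (I w' + 1) * (n+1) ≤ I w * (n+1) := Nat.mul_le_mul_right _ hc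
      have h4 : (I w' + 1) * (n+1) = I w' * (n+1) + (n+1) := by ring
      linarith
    · intro he
      rw [he] at h
      exact Nat.lt_of_add_lt_add_left h
  refine ⟨fun w => ⟨(I w + min (R w) 1) % 2, Nat.mod_lt _ (by norm_num)⟩,
    fun w => I w * (n+1) + R w, ?_, ?_, ?_⟩
  · -- injectivity
    intro w w' h
    simp only at h
    have hmw : (I w * (n+1) + R w) % (n+1) = R w := by
      rw [Nat.mul_comm (I w) (n+1), Nat.mul_add_mod]
      exact Nat.mod_eq_of_lt (by have := hR w; omega)
    have hmw' : (I w' * (n+1) + R w') % (n+1) = R w' := by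
      rw [Nat.mul_comm (I w') (n+1), Nat.mul_add_mod]
      exact Nat.mod_eq_of_lt (by have := hR w'; omega)
    have hdw : (I w * (n+1) + R w) / (n+1) = I w := by
      rw [Nat.mul_comm, Nat.mul_add_div (by omega)]
      rw [Nat.div_eq_of_lt (by have := hR w; omega), Nat.add_zero]
    have hdw' : (I w' * (n+1) + R w') / (n+1) = I w' := by
      rw [Nat.mul_comm, Nat.mul_add_div (by omega)]
      rw [Nat.div_eq_of_lt (by have := hR w'; omega), Nat.add_zero]
    have hReq : R w = R w' := by rw [← hmw, ← hmw', h]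
    have hIeq : I w = I w' := by rw [← hdw, ← hdw', h]
    exact hinj w w' hIeq hReq
  · -- proper coloring
    intro x y hadj hteq
    have h2 : (I x + min (R x) 1) % 2 = (I y + min (R y) 1) % 2 :=
      congrArg Fin.val hteq
    rcases hedge x y hadj with ⟨ha, hb, hc⟩ | ⟨ha, hb, hc⟩ | ⟨ha, hb, hc⟩ <;> omega
  · -- no X-crossing
    rintro a b a' b' h1 h2 h3 h4 ⟨hf1, hf2⟩
    have e1 := hedge a b h1
    have e2 := hedge a' b' h2
    have hA := hlt a a' hf1
    have hB := hlt b' b hf2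
    have hp1 : (I a + min (R a) 1) % 2 = (I a' + min (R a') 1) % 2 :=
      congrArg Fin.val h3
    have hp2 : (I b + min (R b) 1) % 2 = (I b' + min (R b') 1) % 2 :=
      congrArg Fin.val h4
    omega

/-- Every caterpillar (a tree in which every vertex is within distance one of a
central path) admits a 2-track layout: a partition of the vertices into two
independent tracks, each linearly ordered (via `f`), with no X-crossing. -/
theorem stmt10 {V : Type*} [Fintype V] [DecidableEq V] (G : SimpleGraph V)
    (hT : G.IsTree)
    (hcat : ∃ (u v : V) (p : G.Walk u v), p.IsPath ∧
      ∀ w : V, w ∈ p.support ∨ ∃ x ∈ p.support, G.Adj w x) :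
    ∃ (t : V → Fin 2) (f : V → ℕ), Function.Injective f ∧
      (∀ u v, G.Adj u v → t u ≠ t v) ∧
      (∀ a b a' b' : V, G.Adj a b → G.Adj a' b' → t a = t a' → t b = t b' →
        ¬ (f a < f a' ∧ f b' < f b)) := by
  classical
  obtain ⟨u, v, p, hp, hcov⟩ := hcat
  obtain ⟨-, huniq'⟩ := (SimpleGraph.isTree_iff_existsUnique_path).mp hT
  have huq : ∀ {x y : V} (q r : G.Walk x y), q.IsPath → r.IsPath → q = r := by
    intro x y q r hq hr
    obtain ⟨P, -, hPu⟩ := huniq' x y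
    rw [hPu q hq, hPu r hr]
  have hdist : ∀ {x y : V} (q : G.Walk x y), q.IsPath → q.length = G.dist x y := by
    intro x y q hq
    obtain ⟨r, hr, hrl⟩ := hT.isConnected.exists_path_of_dist x y
    rw [huq q r hq hr]; exact hrl
  -- distance from u to a vertex on a path from u determines its position
  have subl : ∀ {y : V} (q : G.Walk u y), q.IsPath → ∀ z (hz : z ∈ q.support),
      G.dist u z ≤ G.dist u y ∧ (G.dist u z = G.dist u y → z = y) := by
    intro y q hq z hz
    have hlen : (q.takeUntil z hz).length + (q.dropUntil z hz).length = q.length := by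
      rw [← Walk.length_append, q.take_spec hz]
    have hdz : (q.takeUntil z hz).length = G.dist u z := hdist (q.takeUntil z hz) (hq.takeUntil hz)
    have hdy : q.length = G.dist u y := hdist q hq
    refine ⟨by omega, fun he => ?_⟩
    have h0 : (q.dropUntil z hz).length = 0 := by omega
    exact Walk.eq_of_length_eq_zero h0
  -- segment of the spine between two spine vertices
  have seg : ∀ x (hx : x ∈ p.support) y (hy : y ∈ p.support),
      ∃ q : G.Walk x y, q.IsPath ∧ ∀ z ∈ q.support, z ∈ p.support := by
    intro x hx y hy
    by_cases hc : y ∈ (p.takeUntil x hx).support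
    · refine ⟨((p.takeUntil x hx).dropUntil y hc).reverse,
        ((hp.takeUntil hx).dropUntil hc).reverse, ?_⟩
      intro z hz
      rw [Walk.support_reverse, List.mem_reverse] at hz
      exact Walk.support_takeUntil_subset p hx (Walk.support_dropUntil_subset _ hc hz)
    · have hy' : y ∈ (p.dropUntil x hx).support := by
        have hsp := p.take_spec hx
        have : y ∈ ((p.takeUntil x hx).append (p.dropUntil x hx)).support := by
          rw [hsp]; exact hy
        rw [Walk.mem_support_append_iff] at this
        tauto
      refine ⟨(p.dropUntil x hx).takeUntil y hy', (hp.dropUntil hx).takeUntil hy', ?_⟩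
      intro z hz
      exact Walk.support_dropUntil_subset p hx (Walk.support_takeUntil_subset _ hy' hz)
  -- injectivity of distance on the spine
  have spineInj : ∀ w (hw : w ∈ p.support), ∀ w' (hw' : w' ∈ p.support),
      G.dist u w = G.dist u w' → w = w' := by
    intro w hw w' hw' hd
    by_cases hc : w' ∈ (p.takeUntil w hw).support
    · exact ((subl _ (hp.takeUntil hw) w' hc).2 hd.symm).symm
    · have hw'2 : w' ∈ (p.dropUntil w hw).support := by
        have hsp := p.take_spec hw
        have : w' ∈ ((p.takeUntil w hw).append (p.dropUntil w hw)).support := by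
          rw [hsp]; exact hw'
        rw [Walk.mem_support_append_iff] at this
        tauto
      have hsplit : p = ((p.takeUntil w hw).append ((p.dropUntil w hw).takeUntil w' hw'2)).append
          ((p.dropUntil w hw).dropUntil w' hw'2) := by
        rw [← Walk.append_assoc, Walk.take_spec, Walk.take_spec]
      have hW : ((p.takeUntil w hw).append ((p.dropUntil w hw).takeUntil w' hw'2)).IsPath := by
        have hpp := hp
        rw [hsplit] at hpp
        exact hpp.of_append_left
      have hwmem : w ∈ ((p.takeUntil w hw).append ((p.dropUntil w hw).takeUntil w' hw'2)).support := by
        rw [Walk.mem_support_append_iff]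
        exact Or.inl (p.takeUntil w hw).end_mem_support
      exact (subl _ hW w hwmem).2 hd
  -- the chosen spine neighbour
  let s : V → V := fun w => if h : w ∈ p.support then w else ((hcov w).resolve_left h).choose
  have hs1 : ∀ w, s w ∈ p.support := by
    intro w
    by_cases h : w ∈ p.support
    · simp [s, h]
    · simp only [s, dif_neg h]
      exact ((hcov w).resolve_left h).choose_spec.1
  have hs2 : ∀ w, w ∉ p.support → G.Adj w (s w) := by
    intro w h
    simp only [s, dif_neg h]
    exact ((hcov w).resolve_left h).choose_spec.2
  have hsS : ∀ w, w ∈ p.support → s w = w := by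
    intro w h; simp [s, h]
  -- no two leaves are adjacent
  have nbl : ∀ x y, G.Adj x y → x ∉ p.support → y ∉ p.support → False := by
    intro x y hxy hx hy
    obtain ⟨q, hq, hqS⟩ := seg (s x) (hs1 x) (s y) (hs1 y)
    have hx_ne : x ∉ q.support := fun h => hx (hqS x h)
    have hy_ne : y ∉ q.support := fun h => hy (hqS y h)
    have hq2 : (Walk.cons (hs2 x hx) (q.concat (hs2 y hy).symm)).IsPath := by
      rw [Walk.isPath_def, Walk.support_cons, Walk.support_concat]
      refine List.nodup_cons.mpr ⟨?_, ?_⟩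
      · intro hmem
        rcases List.mem_append.mp hmem with h | h
        · exact hx_ne h
        · exact hxy.ne (List.mem_singleton.mp h)
      · refine List.nodup_append'.mpr ⟨(Walk.isPath_def _).mp hq, List.nodup_singleton _, ?_⟩
        intro z hz hz'
        rcases List.mem_singleton.mp hz' with rfl
        exact hy_ne hz
    have heq := huq (Walk.cons hxy Walk.nil) (Walk.cons (hs2 x hx) (q.concat (hs2 y hy).symm))
      (by simp [Walk.isPath_def, hxy.ne]) hq2
    have hmem : s x ∈ (Walk.cons hxy Walk.nil).support := by
      rw [heq, Walk.support_cons, Walk.support_concat]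
      exact List.mem_cons_of_mem _ (List.mem_append.mpr (Or.inl q.start_mem_support))
    rw [Walk.support_cons, Walk.support_nil] at hmem
    rcases List.mem_cons.mp hmem with h | h
    · exact hx (h ▸ hs1 x)
    · rcases List.mem_singleton.mp h with h
      exact hy (h ▸ hs1 x)
  -- unique spine neighbour of a leaf
  have usn : ∀ x, x ∉ p.support → ∀ y, y ∈ p.support → G.Adj x y → y = s x := by
    intro x hx y hy hxy
    by_contra hne
    obtain ⟨q, hq, hqS⟩ := seg y hy (s x) (hs1 x)
    have h2 : (Walk.cons hxy.symm (Walk.cons (hs2 x hx) Walk.nil)).IsPath := by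
      simp [Walk.isPath_def, List.nodup_cons]
      refine ⟨⟨?_, hne⟩, ?_⟩
      · intro h; exact hx (h ▸ hy)
      · intro h; exact hx (h ▸ hs1 x)
    have heq := huq q _ hq h2
    have : x ∈ q.support := by rw [heq]; simp
    exact hx (hqS x this)
  -- distances of adjacent vertices differ by one
  have distAdj : ∀ x y, G.Adj x y →
      G.dist u y = G.dist u x + 1 ∨ G.dist u x = G.dist u y + 1 := by
    intro x y hxy
    obtain ⟨q, hq, hql⟩ := hT.isConnected.exists_path_of_dist u x
    by_cases hc : y ∈ q.support
    · right
      have h1 := hdist _ (hq.takeUntil hc)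
      have hone : (q.dropUntil y hc) = Walk.cons hxy.symm Walk.nil :=
        huq _ _ (hq.dropUntil hc) (by simp [Walk.isPath_def, hxy.ne'])
      have hlen : (q.takeUntil y hc).length + (q.dropUntil y hc).length = q.length := by
        rw [← Walk.length_append, q.take_spec hc]
      rw [hone] at hlen
      simp only [Walk.length_cons, Walk.length_nil] at hlen
      omega
    · left
      have hy_ne : y ∉ q.reverse.support := by
        rw [Walk.support_reverse, List.mem_reverse]; exact hc
      have hpth : (Walk.cons hxy.symm q.reverse).IsPath := hq.reverse.cons hy_ne
      have := hdist _ hpth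
      rw [Walk.length_cons, Walk.length_reverse] at this
      rw [SimpleGraph.dist_comm (u := y)] at this
      omega
  -- apply the abstract construction
  apply twotrack_aux G (fun w => G.dist u (s w))
    (fun w => if w ∈ p.support then 0 else (Fintype.equivFin V w : ℕ) + 1)
    (Fintype.card V)
  · intro w
    by_cases h : w ∈ p.support
    · simp [h]
    · simp only [if_neg h]
      exact (Fintype.equivFin V w).2
  · intro w w' hI hRe
    by_cases h : w ∈ p.support <;> by_cases h' : w' ∈ p.support
    · rw [hsS w h, hsS w' h'] at hI
      exact spineInj w h w' h' hI
    · simp [h, h'] at hRe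
    · simp [h, h'] at hRe
    · simp only [if_neg h, if_neg h', Nat.add_right_cancel_iff] at hRe
      exact (Fintype.equivFin V).injective (Fin.ext hRe)
  · intro x y hxy
    by_cases hx : x ∈ p.support <;> by_cases hy : y ∈ p.support
    · left
      refine ⟨by simp [hx], by simp [hy], ?_⟩
      rw [hsS x hx, hsS y hy]
      rcases distAdj x y hxy with h | h
      · left; omega
      · right; omega
    · right; left
      refine ⟨by simp [hx], by simp [hy], ?_⟩
      rw [hsS x hx, ← usn y hy x hx hxy.symm]
    · right; right
      refine ⟨by simp [hx], by simp [hy], ?_⟩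
      rw [hsS y hy, ← usn x hx y hy hxy]
    · exact absurd (nbl x y hxy hx hy) not_false
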